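/- Let T = (C_n, C_n, σ) be a tanglegram of size n ≥ 5 with both trees caterpillars with distance-to-root labelings {v_1,...,v_n} and {u_1,...,u_n}, and suppose v_k is matched to u_k for all 1 ≤ k ≤ m with m < n - 1 maximal (i.e., v_{m+1} is not matched to u_{m+1}). Then exactly m cards T - v_k u_k (1 ≤ k ≤ m) are pairwise isomorphic tanglegrams in which (with labels v'_j, u'_j for the card) v'_j is matched to u'_j for 1 ≤ j ≤ m-1 but v'_m is not matched to u'_m; in each of the remaining n - m cards, v'_j is matched to u'_j for all 1 ≤ j ≤ m. -/

import Mathlib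

/-- A rooted binary tree: every vertex has zero or two children. -/
inductive RBT : Type
  | leaf : RBT
  | node : RBT → RBT → RBT
deriving DecidableEq

namespace RBT
/-- Number of leaves. -/
def numLeaves : RBT → ℕ
  | leaf => 1
  | node l r => l.numLeaves + r.numLeaves

/-- Root-preserving isomorphism of rooted binary trees (children may be swapped). -/
inductive Iso : RBT → RBT → Prop
  | leaf : Iso leaf leaf
  | node {a b c d : RBT} : Iso a c → Iso b d → Iso (node a b) (node c d)
  | swap {a b c d : RBT} : Iso a d → Iso b c → Iso (node a b) (node c d)
end RBT

/-- A rooted binary tree with natural-number labels on its leaves. -/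
inductive LTree : Type
  | leaf : ℕ → LTree
  | node : LTree → LTree → LTree
deriving DecidableEq

namespace LTree

/-- The multiset of leaf labels. -/
def labels : LTree → Multiset ℕ
  | leaf a => {a}
  | node l r => l.labels + r.labels

/-- Relabel the leaves. -/
def map (f : ℕ → ℕ) : LTree → LTree
  | leaf a => leaf (f a)
  | node l r => node (map f l) (map f r)

/-- Forget the labels, obtaining a plain rooted binary tree. -/
def forget : LTree → RBT
  | leaf _ => .leaf
  | node l r => .node l.forget r.forget

/-- Delete the leaf (or leaves) with label `i`, suppressing the resulting degree-2 vertices;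
returns `none` if nothing is left. -/
def del (i : ℕ) : LTree → Option LTree
  | leaf a => if a = i then none else some (leaf a)
  | node l r =>
    match l.del i with
    | none => some r
    | some l' =>
      match r.del i with
      | none => some l'
      | some r' => some (node l' r')

/-- Label-preserving, root-preserving isomorphism of labeled trees (children may be swapped). -/
inductive LIso : LTree → LTree → Prop
  | leaf (a : ℕ) : LIso (leaf a) (leaf a)
  | node {a b c d : LTree} : LIso a c → LIso b d → LIso (node a b) (node c d)
  | swap {a b c d : LTree} : LIso a d → LIso b c → LIso (node a b) (node c d)

end LTree

/-- A tanglegram is modeled as a pair of labeled trees in which matched leaves carry the same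
label: the labels of the left tree are distinct and coincide (as a multiset) with the labels of
the right tree. -/
def IsTgl (p : LTree × LTree) : Prop := p.1.labels.Nodup ∧ p.1.labels = p.2.labels

/-- The size of a tanglegram: its number of matching edges. -/
def tglSize (p : LTree × LTree) : ℕ := Multiset.card p.1.labels

/-- Tanglegram isomorphism: a relabeling of the matching edges under which the left trees and
the right trees become isomorphic (mapping left root to left root and right root to right
root, and preserving the matching). -/
def TIso (p q : LTree × LTree) : Prop :=
  ∃ π : ℕ ≃ ℕ, LTree.LIso (p.1.map π) q.1 ∧ LTree.LIso (p.2.map π) q.2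

/-- The card of a tanglegram obtained by deleting the matched leaf pair with label `i`. -/
def tcard (p : LTree × LTree) (i : ℕ) : LTree × LTree :=
  ((p.1.del i).getD (.leaf 0), (p.2.del i).getD (.leaf 0))

/-- The multideck of a tanglegram: the multiset of cards obtained by deleting one matched leaf
pair in every possible way. -/
def tdeck (p : LTree × LTree) : Multiset (LTree × LTree) :=
  p.1.labels.map (fun i => tcard p i)

/-- `lcat k n` is the caterpillar on n leaves with a distance-to-root labeling whose labels are
k, k+1, ..., k+n-1 (label k+j-1 on the strippable leaf at distance j from the root). In
particular `lcat 1 n` is C_n with distance-to-root labeling v_1, ..., v_n. -/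
def lcat : ℕ → ℕ → LTree
  | k, 0 => .leaf k
  | k, 1 => .leaf k
  | k, n + 2 => .node (.leaf k) (lcat (k + 1) (n + 1))

/-- For a caterpillar-shaped labeled tree, the list of leaf labels in distance-to-root order:
entry j-1 (0-indexed) is the label of the leaf v_j of the distance-to-root labeling.
(Returns junk on non-caterpillar trees.) -/
def catList : LTree → List ℕ
  | .leaf a => [a]
  | .node (.leaf a) r => a :: catList r
  | .node l (.leaf a) => a :: catList l
  | .node _ _ => []

/-- In a card whose trees are caterpillars with distance-to-root labelings v'_1, …  and
u'_1, …, the leaf v'_j is matched to u'_j (both exist and carry the same matching label). -/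
def matchedAt (p : LTree × LTree) (j : ℕ) : Prop :=
  ∃ a, (catList p.1)[j - 1]? = some a ∧ (catList p.2)[j - 1]? = some a


/-! ### Auxiliary machinery -/

/-- Build a caterpillar from a list of labels. -/
def fromL : List ℕ → LTree
  | [] => .leaf 0
  | [a] => .leaf a
  | a :: b :: l => .node (.leaf a) (fromL (b :: l))

lemma fromL_cons (a : ℕ) {l : List ℕ} (h : l ≠ []) :
    fromL (a :: l) = .node (.leaf a) (fromL l) := by
  cases l with
  | nil => exact absurd rfl h
  | cons b t => rfl

lemma lcat_eq_fromL : ∀ (n k : ℕ), 1 ≤ n → lcat k n = fromL (List.range' k n)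
  | 0, _, h => by omega
  | 1, k, _ => rfl
  | n + 2, k, _ => by
    show LTree.node (.leaf k) (lcat (k + 1) (n + 1)) = _
    rw [lcat_eq_fromL (n + 1) (k + 1) (by omega),
      show List.range' k (n + 2) = k :: List.range' (k + 1) (n + 1) from List.range'_succ .. ,
      fromL_cons k (by simp)]

lemma catList_node_leaf (a : ℕ) (r : LTree) :
    catList (.node (.leaf a) r) = a :: catList r := by
  cases r <;> rfl

lemma catList_fromL : ∀ l : List ℕ, l ≠ [] → catList (fromL l) = l
  | [a], _ => rfl
  | a :: b :: t, _ => by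
    rw [show fromL (a :: b :: t) = .node (.leaf a) (fromL (b :: t)) from rfl,
      catList_node_leaf, catList_fromL (b :: t) (by simp)]

lemma map_fromL (f : ℕ → ℕ) : ∀ l : List ℕ, l ≠ [] → (fromL l).map f = fromL (l.map f)
  | [a], _ => rfl
  | a :: b :: t, _ => by
    rw [show fromL (a :: b :: t) = .node (.leaf a) (fromL (b :: t)) from rfl]
    rw [show ((LTree.node (.leaf a) (fromL (b :: t)))).map f
        = .node (.leaf (f a)) ((fromL (b :: t)).map f) from rfl]
    rw [map_fromL f (b :: t) (by simp), show (a :: b :: t).map f = f a :: (b :: t).map f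
      from rfl, fromL_cons (f a) (by simp)]

lemma del_leaf (i a : ℕ) :
    (LTree.leaf a).del i = if a = i then none else some (.leaf a) := rfl

lemma del_node (i : ℕ) (l r : LTree) :
    (LTree.node l r).del i =
      match l.del i with
      | none => some r
      | some l' =>
        match r.del i with
        | none => some l'
        | some r' => some (.node l' r') := rfl

lemma del_fromL (i : ℕ) : ∀ l : List ℕ, l ≠ [] → l.erase i ≠ [] →
    (fromL l).del i = some (fromL (l.erase i))
  | [a], _, he => by
    have hai : a ≠ i := by
      intro h; subst h; simp [List.erase_cons_head] at he
    have h1 : [a].erase i = [a] := by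
      rw [List.erase_cons_tail (by simpa using hai), List.erase_nil]
    rw [h1, show fromL [a] = .leaf a from rfl, del_leaf, if_neg hai]
  | a :: b :: t, _, he => by
    rw [show fromL (a :: b :: t) = .node (.leaf a) (fromL (b :: t)) from rfl]
    by_cases hai : a = i
    · subst hai
      have h1 : (a :: b :: t).erase a = b :: t := List.erase_cons_head ..
      rw [h1, del_node, del_leaf, if_pos rfl]
    · have herase : (a :: b :: t).erase i = a :: (b :: t).erase i :=
        List.erase_cons_tail (by simpa using hai)
      by_cases hbt : (b :: t).erase i = []
      · have hb : b = i ∧ t = [] := by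
          rcases eq_or_ne b i with h | h
          · subst h
            rw [List.erase_cons_head] at hbt
            exact ⟨rfl, hbt⟩
          · rw [List.erase_cons_tail (by simpa using h)] at hbt
            simp at hbt
        obtain ⟨hb, ht⟩ := hb
        subst hb; subst ht
        rw [herase, hbt, del_node, del_leaf, if_neg hai,
          show fromL [b] = LTree.leaf b from rfl, del_leaf, if_pos rfl]
        rfl
      · have ih := del_fromL i (b :: t) (by simp) hbt
        rw [herase, fromL_cons a hbt, del_node, del_leaf, if_neg hai, ih]

lemma liso_refl : ∀ t : LTree, LTree.LIso t t
  | .leaf a => .leaf a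
  | .node l r => .node (liso_refl l) (liso_refl r)

/-- The cycle sending `k ↦ k+d` and `x ↦ x-1` for `k < x ≤ k+d`. -/
def rotp (k : ℕ) : ℕ → Equiv.Perm ℕ
  | 0 => 1
  | d + 1 => Equiv.swap (k + d) (k + d + 1) * rotp k d

lemma rotp_lt {k x : ℕ} : ∀ d, x < k → rotp k d x = x
  | 0, _ => rfl
  | d + 1, h => by
    rw [rotp, Equiv.Perm.mul_apply, rotp_lt d h,
      Equiv.swap_apply_of_ne_of_ne (by omega) (by omega)]

lemma rotp_gt {k x : ℕ} : ∀ d, k + d < x → rotp k d x = x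
  | 0, _ => rfl
  | d + 1, h => by
    rw [rotp, Equiv.Perm.mul_apply, rotp_gt d (by omega),
      Equiv.swap_apply_of_ne_of_ne (by omega) (by omega)]

lemma rotp_self (k : ℕ) : ∀ d, rotp k d k = k + d
  | 0 => rfl
  | d + 1 => by
    rw [rotp, Equiv.Perm.mul_apply, rotp_self k d, Equiv.swap_apply_left]
    omega

lemma rotp_mid {k x : ℕ} : ∀ d, k < x → x ≤ k + d → rotp k d x = x - 1
  | 0, h1, h2 => by omega
  | d + 1, h1, h2 => by
    rcases Nat.lt_or_ge x (k + d + 1) with h | h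
    · rw [rotp, Equiv.Perm.mul_apply, rotp_mid d h1 (by omega),
        Equiv.swap_apply_of_ne_of_ne (by omega) (by omega)]
    · have hx : x = k + d + 1 := by omega
      subst hx
      rw [rotp, Equiv.Perm.mul_apply, rotp_gt d (by omega), Equiv.swap_apply_right]
      omega

lemma map_range'_eq (f : ℕ → ℕ) : ∀ (len s s' : ℕ), (∀ i < len, f (s + i) = s' + i) →
    (List.range' s len).map f = List.range' s' len
  | 0, _, _, _ => rfl
  | len + 1, s, s', h => by
    rw [List.range'_succ, List.range'_succ, List.map_cons]
    have h0 := h 0 (by omega)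
    simp only [Nat.add_zero] at h0
    rw [h0, map_range'_eq f len (s + 1) (s' + 1)
      (fun i hi => by
        have hh := h (i + 1) (by omega)
        rw [show s + 1 + i = s + (i + 1) by omega, hh]
        omega)]

lemma range'_split (k m : ℕ) (h1 : 1 ≤ k) (h2 : k ≤ m) :
    List.range' 1 m = List.range' 1 (k - 1) ++ k :: List.range' (k + 1) (m - k) := by
  have h := List.range'_append (s := 1) (m := k - 1) (n := m - k + 1) (step := 1)
  rw [show 1 + 1 * (k - 1) = k by omega, show k - 1 + (m - k + 1) = m by omega] at h
  rw [← h, List.range'_succ]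

lemma range'_erase (k m : ℕ) (h1 : 1 ≤ k) (h2 : k ≤ m) :
    (List.range' 1 m).erase k = List.range' 1 (k - 1) ++ List.range' (k + 1) (m - k) := by
  rw [range'_split k m h1 h2,
    List.erase_append_right _ (by rw [List.mem_range'_1]; omega), List.erase_cons_head]

lemma map_rotp_erase (k m : ℕ) (h1 : 1 ≤ k) (h2 : k ≤ m) :
    ((List.range' 1 m).erase k).map (rotp k (m - k)) = List.range' 1 (m - 1) := by
  rw [range'_erase k m h1 h2, List.map_append,
    map_range'_eq (rotp k (m - k)) (k - 1) 1 1
      (fun i hi => by rw [rotp_lt _ (by omega)]),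
    map_range'_eq (rotp k (m - k)) (m - k) (k + 1) k
      (fun i hi => by rw [rotp_mid _ (by omega) (by omega)]; omega)]
  have h := List.range'_append (s := 1) (m := k - 1) (n := m - k) (step := 1)
  rw [show 1 + 1 * (k - 1) = k by omega] at h
  rw [h]
  congr 1
  omega

lemma map_cancel (g : Equiv.Perm ℕ) (l : List ℕ) : (l.map g).map ⇑g⁻¹ = l := by
  rw [List.map_map]
  have h : ⇑g⁻¹ ∘ ⇑g = id := by funext x; simp
  rw [h, List.map_id]

/-- Let T = (C_n, C_n, σ) with n ≥ 5, both trees caterpillars with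
distance-to-root labelings v_1,…,v_n and u_1,…,u_n (the left tree is `lcat 1 n` and the right
tree is `lcat 1 n` relabeled by the permutation σ, so that v_{σ i} is matched to u_i).
Suppose v_k is matched to u_k for all 1 ≤ k ≤ m, with 1 ≤ m < n - 1 maximal (v_{m+1} is not
matched to u_{m+1}). Then the m cards T - v_k u_k (1 ≤ k ≤ m) are pairwise isomorphic
tanglegrams in which v'_j is matched to u'_j for 1 ≤ j ≤ m - 1 but v'_m is not matched to
u'_m, and in each of the remaining n - m cards v'_j is matched to u'_j for all 1 ≤ j ≤ m. -/
theorem caterpillar_caterpillar_card_structure (n m : ℕ) (σ : Equiv.Perm ℕ) (hn : 5 ≤ n)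
    (hσ : ∀ k ∈ Finset.Icc 1 n, σ k ∈ Finset.Icc 1 n)
    (hm1 : 1 ≤ m) (hm : m < n - 1)
    (hmatch : ∀ k, 1 ≤ k → k ≤ m → σ k = k)
    (hmax : σ (m + 1) ≠ m + 1) :
    ∀ T : LTree × LTree, T = (lcat 1 n, (lcat 1 n).map σ) →
      (∀ k k', 1 ≤ k → k ≤ m → 1 ≤ k' → k' ≤ m → TIso (tcard T k) (tcard T k')) ∧
      (∀ k, 1 ≤ k → k ≤ m →
        (∀ j, 1 ≤ j → j ≤ m - 1 → matchedAt (tcard T k) j) ∧ ¬ matchedAt (tcard T k) m) ∧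
      (∀ i, m < i → i ≤ n → ∀ j, 1 ≤ j → j ≤ m → matchedAt (tcard T i) j) := by
  intro T hT
  subst hT
  have hn1 : (1:ℕ) ≤ n := by omega
  have hLne : List.range' 1 n ≠ [] := by
    intro h
    have := congrArg List.length h
    rw [List.length_range'] at this
    simp at this
    omega
  have hLe : ∀ i, (List.range' 1 n).erase i ≠ [] := by
    intro i h
    have hl := congrArg List.length h
    rw [List.length_erase] at hl
    split at hl <;> rw [List.length_range'] at hl <;> simp at hl <;> omega
  have hRe : ∀ i, ((List.range' 1 n).map σ).erase i ≠ [] := by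
    intro i h
    have hl := congrArg List.length h
    rw [List.length_erase] at hl
    split at hl <;> rw [List.length_map, List.length_range'] at hl <;> simp at hl <;> omega
  have hRne : (List.range' 1 n).map σ ≠ [] := by
    intro h
    have := congrArg List.length h
    rw [List.length_map, List.length_range'] at this
    simp at this
    omega
  have cardL : ∀ i, (tcard (lcat 1 n, (lcat 1 n).map σ) i).1
      = fromL ((List.range' 1 n).erase i) := by
    intro i
    show ((lcat 1 n).del i).getD (.leaf 0) = _
    rw [lcat_eq_fromL n 1 hn1, del_fromL i _ hLne (hLe i), Option.getD_some]
  have cardR : ∀ i, (tcard (lcat 1 n, (lcat 1 n).map σ) i).2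
      = fromL (((List.range' 1 n).map σ).erase i) := by
    intro i
    show (((lcat 1 n).map σ).del i).getD (.leaf 0) = _
    rw [lcat_eq_fromL n 1 hn1, map_fromL σ _ hLne, del_fromL i _ hRne (hRe i),
      Option.getD_some]
  have hsplitL : List.range' 1 n = List.range' 1 m ++ List.range' (m + 1) (n - m) := by
    have h := List.range'_append (s := 1) (m := m) (n := n - m) (step := 1)
    rw [show 1 + 1 * m = m + 1 by omega, show m + (n - m) = n by omega] at h
    exact h.symm
  have hmapfix : (List.range' 1 m).map σ = List.range' 1 m :=
    map_range'_eq σ m 1 1 (fun i hi => by rw [hmatch (1 + i) (by omega) (by omega)])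
  have hsplitR : (List.range' 1 n).map σ
      = List.range' 1 m ++ (List.range' (m + 1) (n - m)).map σ := by
    rw [hsplitL, List.map_append, hmapfix]
  have hσgt : ∀ x ∈ List.range' (m + 1) (n - m), m < σ x := by
    intro x hx
    rw [List.mem_range'_1] at hx
    have h1 := hσ x (by rw [Finset.mem_Icc]; omega)
    rw [Finset.mem_Icc] at h1
    by_contra hle
    push_neg at hle
    have h2 : σ (σ x) = σ x := hmatch (σ x) (by omega) (by omega)
    have h3 := σ.injective h2
    omega
  have hmem : ∀ k, 1 ≤ k → k ≤ m → k ∈ List.range' 1 m := by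
    intro k h1 h2
    rw [List.mem_range'_1]
    omega
  have heraseL : ∀ k, 1 ≤ k → k ≤ m → (List.range' 1 n).erase k
      = (List.range' 1 m).erase k ++ List.range' (m + 1) (n - m) := by
    intro k h1 h2
    rw [hsplitL, List.erase_append_left _ (hmem k h1 h2)]
  have heraseR : ∀ k, 1 ≤ k → k ≤ m → ((List.range' 1 n).map σ).erase k
      = (List.range' 1 m).erase k ++ (List.range' (m + 1) (n - m)).map σ := by
    intro k h1 h2
    rw [hsplitR, List.erase_append_left _ (hmem k h1 h2)]
  have hlen_em : ∀ k, 1 ≤ k → k ≤ m → ((List.range' 1 m).erase k).length = m - 1 := by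
    intro k h1 h2
    rw [List.length_erase_of_mem (hmem k h1 h2), List.length_range']
  have claimL : ∀ k, 1 ≤ k → k ≤ m → ((List.range' 1 n).erase k).map (rotp k (m - k))
      = List.range' 1 (m - 1) ++ List.range' (m + 1) (n - m) := by
    intro k h1 h2
    rw [heraseL k h1 h2, List.map_append, map_rotp_erase k m h1 h2]
    congr 1
    have hfix : ∀ x ∈ List.range' (m + 1) (n - m), rotp k (m - k) x = id x := by
      intro x hx
      rw [List.mem_range'_1] at hx
      exact rotp_gt _ (by omega)
    rw [List.map_congr_left hfix, List.map_id]
  have claimR : ∀ k, 1 ≤ k → k ≤ m →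
      (((List.range' 1 n).map σ).erase k).map (rotp k (m - k))
      = List.range' 1 (m - 1) ++ (List.range' (m + 1) (n - m)).map σ := by
    intro k h1 h2
    rw [heraseR k h1 h2, List.map_append, map_rotp_erase k m h1 h2]
    congr 1
    have hfix : ∀ x ∈ (List.range' (m + 1) (n - m)).map σ, rotp k (m - k) x = id x := by
      intro x hx
      rw [List.mem_map] at hx
      obtain ⟨y, hy, rfl⟩ := hx
      exact rotp_gt _ (by have := hσgt y hy; omega)
    rw [List.map_congr_left hfix, List.map_id]
  refine ⟨?_, ?_, ?_⟩
  · -- Part 1: the m cards are pairwise isomorphic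
    intro k k' h1 h2 h1' h2'
    refine ⟨(rotp k (m - k)).trans (rotp k' (m - k'))⁻¹, ?_, ?_⟩
    · have hcalc : ((List.range' 1 n).erase k).map
          ⇑((rotp k (m - k)).trans (rotp k' (m - k'))⁻¹) = (List.range' 1 n).erase k' := by
        have hco : ⇑((rotp k (m - k)).trans (rotp k' (m - k'))⁻¹)
            = ⇑(rotp k' (m - k'))⁻¹ ∘ ⇑(rotp k (m - k)) := rfl
        rw [hco, ← List.map_map, claimL k h1 h2, ← claimL k' h1' h2', map_cancel]
      rw [cardL k, cardL k', map_fromL _ _ (hLe k), hcalc]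
      exact liso_refl _
    · have hcalc : (((List.range' 1 n).map σ).erase k).map
          ⇑((rotp k (m - k)).trans (rotp k' (m - k'))⁻¹)
          = ((List.range' 1 n).map σ).erase k' := by
        have hco : ⇑((rotp k (m - k)).trans (rotp k' (m - k'))⁻¹)
            = ⇑(rotp k' (m - k'))⁻¹ ∘ ⇑(rotp k (m - k)) := rfl
        rw [hco, ← List.map_map, claimR k h1 h2, ← claimR k' h1' h2', map_cancel]
      rw [cardR k, cardR k', map_fromL _ _ (hRe k), hcalc]
      exact liso_refl _
  · -- Part 2: matched at 1..m-1, not matched at m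
    intro k h1 h2
    have e1 : catList (tcard (lcat 1 n, (lcat 1 n).map σ) k).1
        = (List.range' 1 m).erase k ++ List.range' (m + 1) (n - m) := by
      rw [cardL k, catList_fromL _ (hLe k), heraseL k h1 h2]
    have e2 : catList (tcard (lcat 1 n, (lcat 1 n).map σ) k).2
        = (List.range' 1 m).erase k ++ (List.range' (m + 1) (n - m)).map σ := by
      rw [cardR k, catList_fromL _ (hRe k), heraseR k h1 h2]
    constructor
    · intro j hj1 hj2
      have hjlt : j - 1 < ((List.range' 1 m).erase k).length := by
        rw [hlen_em k h1 h2]; omega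
      refine ⟨((List.range' 1 m).erase k)[j - 1]'hjlt, ?_, ?_⟩
      · rw [e1, List.getElem?_append_left hjlt, List.getElem?_eq_getElem hjlt]
      · rw [e2, List.getElem?_append_left hjlt, List.getElem?_eq_getElem hjlt]
    · rintro ⟨a, ha1, ha2⟩
      rw [e1, List.getElem?_append_right (le_of_eq (hlen_em k h1 h2)),
        hlen_em k h1 h2, show m - 1 - (m - 1) = 0 by omega,
        List.getElem?_range' (i := 0) (n := n - m) (by omega)] at ha1
      rw [e2, List.getElem?_append_right (le_of_eq (hlen_em k h1 h2)),
        hlen_em k h1 h2, show m - 1 - (m - 1) = 0 by omega, List.getElem?_map,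
        List.getElem?_range' (i := 0) (n := n - m) (by omega)] at ha2
      simp only [Option.map_some, Option.some.injEq] at ha1 ha2
      apply hmax
      rw [show m + 1 + 1 * 0 = m + 1 by omega] at ha1 ha2
      rw [ha2, ← ha1]
  · -- Part 3: remaining cards matched at 1..m
    intro i hi1 hi2 j hj1 hj2
    have hnotmem : i ∉ List.range' 1 m := by
      rw [List.mem_range'_1]; omega
    have e1 : catList (tcard (lcat 1 n, (lcat 1 n).map σ) i).1
        = List.range' 1 m ++ (List.range' (m + 1) (n - m)).erase i := by
      rw [cardL i, catList_fromL _ (hLe i), hsplitL, List.erase_append_right _ hnotmem]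
    have e2 : catList (tcard (lcat 1 n, (lcat 1 n).map σ) i).2
        = List.range' 1 m ++ ((List.range' (m + 1) (n - m)).map σ).erase i := by
      rw [cardR i, catList_fromL _ (hRe i), hsplitR, List.erase_append_right _ hnotmem]
    have hjlt : j - 1 < (List.range' 1 m).length := by
      rw [List.length_range']; omega
    refine ⟨1 + 1 * (j - 1), ?_, ?_⟩
    · rw [e1, List.getElem?_append_left hjlt, List.getElem?_range' (i := j - 1) (n := m) (by omega)]
    · rw [e2, List.getElem?_append_left hjlt, List.getElem?_range' (i := j - 1) (n := m) (by omega)]
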